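/- Let F be the free group on generators a₁,…,a_m with m ≥ 2, and define f : F → ℤ by f(g) = (number of occurrences of the word a₁a₁ in the reduced word representing g) − (number of occurrences of a₁⁻¹a₁⁻¹ in the reduced word representing g). For i ≥ 1 set b_i = a₂^i a₁^{−i} a₂ a₁^i. Then for all j > i ≥ 1 and all n ∈ ℤ, the element g = b_i b_j^{−1} satisfies f(gⁿ) = n. -/

import Mathlib

set_option linter.unusedSectionVars false
set_option maxHeartbeats 1000000

/-- The number of (contiguous) occurrences of the word `p` in the word `w`. -/
def occCount {α : Type*} [DecidableEq α] (w p : List α) : ℕ :=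
  ((List.range w.length).filter fun i => (w.drop i).take p.length = p).length

section Aux
variable {α : Type*} [DecidableEq α]

theorem occCount_cons (a : α) (w p : List α) :
    occCount (a :: w) p =
      (if ((a :: w).take p.length = p) then 1 else 0) + occCount w p := by
  unfold occCount
  rw [List.length_cons, List.range_succ_eq_map, List.filter_cons, List.filter_map]
  simp only [Function.comp_def, List.drop_succ_cons, List.drop_zero]
  split <;> simp_all [add_comm]

theorem occCount_nil (p : List α) : occCount [] p = 0 := rfl

theorem occ_skip (a c d : α) (h : a ≠ c) (k : ℕ) (w : List α) :
    occCount (List.replicate k a ++ w) [c, d] = occCount w [c, d] := by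
  induction k with
  | zero => simp
  | succ n ih =>
    rw [List.replicate_succ, List.cons_append, occCount_cons, ih, if_neg]
    · simp
    · simp [h]

theorem occ_run (c : α) (k : ℕ) (hk : 1 ≤ k) (w : List α)
    (h : w.head? ≠ some c) :
    occCount (List.replicate k c ++ w) [c, c] = (k - 1) + occCount w [c, c] := by
  induction k with
  | zero => omega
  | succ n ih =>
    rw [List.replicate_succ, List.cons_append, occCount_cons]
    rcases Nat.eq_zero_or_pos n with hn | hn
    · subst hn
      rw [if_neg]
      · simp
      · cases w with
        | nil => simp
        | cons b t => simp at h ⊢; simp [h]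
    · rw [ih hn, if_pos]
      · omega
      · obtain ⟨n', rfl⟩ : ∃ n', n = n' + 1 := ⟨n - 1, by omega⟩
        simp [List.replicate_succ]

/-- expand a run-length encoded word -/
def runs (l : List ((α × Bool) × ℕ)) : List (α × Bool) :=
  (l.map fun p => List.replicate p.2 p.1).flatten

theorem runs_nil : runs ([] : List ((α × Bool) × ℕ)) = [] := rfl

theorem runs_cons (p : (α × Bool) × ℕ) (l : List ((α × Bool) × ℕ)) :
    runs (p :: l) = List.replicate p.2 p.1 ++ runs l := by simp [runs]

theorem runs_append (l₁ l₂ : List ((α × Bool) × ℕ)) :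
    runs (l₁ ++ l₂) = runs l₁ ++ runs l₂ := by simp [runs]

theorem head?_runs (p : (α × Bool) × ℕ) (l : List ((α × Bool) × ℕ)) (hp : 1 ≤ p.2) :
    (runs (p :: l)).head? = some p.1 := by
  obtain ⟨k, hk⟩ : ∃ k, p.2 = k + 1 := ⟨p.2 - 1, by omega⟩
  rw [runs_cons, hk]
  simp [List.replicate_succ]

/-- reduce of a word with no adjacent cancelling pair is itself -/
theorem reduce_eq_self (w : List (α × Bool))
    (h : w.Chain' fun a b => a.1 = b.1 → a.2 = b.2) :
    FreeGroup.reduce w = w := by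
  induction w with
  | nil => rfl
  | cons x t ih =>
    rw [FreeGroup.reduce.cons, ih h.tail]
    cases t with
    | nil => rfl
    | cons y s =>
      simp only []
      rw [if_neg]
      rintro ⟨h1, h2⟩
      have := (List.isChain_cons_cons.mp h).1 h1
      simp [this] at h2

theorem chain'_runs (l : List ((α × Bool) × ℕ)) (h1 : ∀ p ∈ l, 1 ≤ p.2)
    (h2 : l.Chain' fun p q => p.1.1 ≠ q.1.1) :
    (runs l).Chain' fun a b => a.1 = b.1 → a.2 = b.2 := by
  induction l with
  | nil => exact List.isChain_nil
  | cons p l ih =>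
    rw [runs_cons]
    apply List.IsChain.append
    · exact List.isChain_replicate_of_rel _ (fun _ => rfl)
    · exact ih (fun q hq => h1 q (List.mem_cons_of_mem _ hq)) h2.tail
    · intro x hx y hy
      have hx' : x = p.1 := by
        rcases List.mem_replicate.mp (List.mem_of_mem_getLast? hx) with ⟨_, h⟩
        exact h
      cases l with
      | nil => simp [runs_nil] at hy
      | cons q l' =>
        rw [head?_runs _ _ (h1 q (by simp))] at hy
        have hy' : y = q.1 := by injection hy with h; exact h.symm
        subst hx' hy'
        intro hc
        exact absurd hc ((List.isChain_cons_cons.mp h2).1)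

theorem occCount_runs (c : α × Bool) (l : List ((α × Bool) × ℕ)) (h1 : ∀ p ∈ l, 1 ≤ p.2)
    (h2 : l.Chain' fun p q => p.1.1 ≠ q.1.1) :
    occCount (runs l) [c, c] = (l.map fun p => if p.1 = c then p.2 - 1 else 0).sum := by
  induction l with
  | nil => simp [runs_nil, occCount_nil]
  | cons p l ih =>
    rw [runs_cons, List.map_cons, List.sum_cons,
      ← ih (fun q hq => h1 q (List.mem_cons_of_mem _ hq)) h2.tail]
    by_cases hp : p.1 = c
    · rw [if_pos hp, hp, occ_run c p.2 (h1 p (by simp))]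
      cases l with
      | nil => simp [runs_nil]
      | cons q l' =>
        rw [head?_runs _ _ (h1 q (by simp))]
        have : q.1 ≠ c := by
          intro hq
          exact (List.isChain_cons_cons.mp h2).1 (by rw [hp, hq])
        simp [this]
    · rw [if_neg hp, occ_skip p.1 c c (by exact hp) _ _, zero_add]

theorem mk_replicate_true (x : α) (k : ℕ) :
    FreeGroup.mk (List.replicate k (x, true)) = FreeGroup.of x ^ k := by
  induction k with
  | zero => simp [FreeGroup.one_eq_mk]
  | succ n ih => rw [List.replicate_succ, pow_succ', ← ih, FreeGroup.of, FreeGroup.mul_mk]; rfl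

theorem mk_replicate_false (x : α) (k : ℕ) :
    FreeGroup.mk (List.replicate k (x, false)) = (FreeGroup.of x ^ k)⁻¹ := by
  have h1 : FreeGroup.mk [(x, false)] = (FreeGroup.of x)⁻¹ := by
    rw [FreeGroup.of, FreeGroup.inv_mk]; simp [FreeGroup.invRev]
  induction k with
  | zero => simp [FreeGroup.one_eq_mk]
  | succ n ih =>
    rw [List.replicate_succ, pow_succ, mul_inv_rev, ← ih, ← h1, FreeGroup.mul_mk]; rfl

theorem core (h : FreeGroup α) (H M T : List ((α × Bool) × ℕ))
    (hcH : ∀ p ∈ H, 1 ≤ p.2) (hcM : ∀ p ∈ M, 1 ≤ p.2) (hcT : ∀ p ∈ T, 1 ≤ p.2)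
    (chH : H.Chain' fun p q => p.1.1 ≠ q.1.1) (chM : M.Chain' fun p q => p.1.1 ≠ q.1.1)
    (chT : T.Chain' fun p q => p.1.1 ≠ q.1.1)
    (bHM : ∀ x ∈ H.getLast?, ∀ y ∈ M.head?, x.1.1 ≠ y.1.1)
    (bHT : ∀ x ∈ H.getLast?, ∀ y ∈ T.head?, x.1.1 ≠ y.1.1)
    (bMM : ∀ x ∈ M.getLast?, ∀ y ∈ M.head?, x.1.1 ≠ y.1.1)
    (bMT : ∀ x ∈ M.getLast?, ∀ y ∈ T.head?, x.1.1 ≠ y.1.1)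
    (e1 : FreeGroup.mk (runs (H ++ T)) = h)
    (e2 : FreeGroup.mk (runs (M ++ T)) = FreeGroup.mk (runs T) * h)
    (n : ℕ) :
    (h ^ (n + 1)).toWord = runs (H ++ (List.replicate n M).flatten ++ T) ∧
      (∀ p ∈ H ++ (List.replicate n M).flatten ++ T, 1 ≤ p.2) ∧
      (H ++ (List.replicate n M).flatten ++ T).Chain' (fun p q => p.1.1 ≠ q.1.1) := by
  have keyA : ∀ k : ℕ,
      ((List.replicate k M).flatten ++ T).Chain' (fun p q => p.1.1 ≠ q.1.1) ∧
      ∀ y ∈ ((List.replicate k M).flatten ++ T).head?,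
        (∀ x ∈ H.getLast?, x.1.1 ≠ y.1.1) ∧ (∀ x ∈ M.getLast?, x.1.1 ≠ y.1.1) := by
    intro k
    induction k with
    | zero =>
      refine ⟨by simpa using chT, ?_⟩
      intro y hy
      simp only [List.replicate_zero, List.flatten_nil, List.nil_append] at hy
      exact ⟨fun x hx => bHT x hx y hy, fun x hx => bMT x hx y hy⟩
    | succ k ih =>
      rw [List.replicate_succ, List.flatten_cons, List.append_assoc]
      constructor
      · exact List.isChain_append.mpr ⟨chM, ih.1, fun x hx y hy => (ih.2 y hy).2 x hx⟩
      · intro y hy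
        cases M with
        | nil => simp only [List.nil_append] at hy; exact ih.2 y hy
        | cons q M' =>
          simp only [List.cons_append, List.head?_cons, Option.mem_some_iff] at hy
          subst hy
          refine ⟨fun x hx => bHM x hx q (by simp), fun x hx => bMM x hx q (by simp)⟩
  have keyB : ∀ k : ℕ,
      FreeGroup.mk (runs ((List.replicate k M).flatten ++ T)) =
        FreeGroup.mk (runs T) * h ^ k := by
    intro k
    induction k with
    | zero => simp
    | succ k ih =>
      rw [List.replicate_succ, List.flatten_cons, List.append_assoc, runs_append,
        ← FreeGroup.mul_mk, ih, ← mul_assoc, FreeGroup.mul_mk, ← runs_append, e2,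
        mul_assoc, ← pow_succ']
  have keyC : FreeGroup.mk (runs (H ++ (List.replicate n M).flatten ++ T)) = h ^ (n + 1) := by
    rw [List.append_assoc, runs_append, ← FreeGroup.mul_mk, keyB, ← mul_assoc,
      FreeGroup.mul_mk, ← runs_append, e1, pow_succ']
  have hcnt : ∀ p ∈ H ++ (List.replicate n M).flatten ++ T, 1 ≤ p.2 := by
    intro p hp
    simp only [List.mem_append, List.mem_flatten] at hp
    rcases hp with (hp | ⟨L, hL, hpL⟩) | hp
    · exact hcH p hp
    · rw [(List.mem_replicate.mp hL).2] at hpL; exact hcM p hpL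
    · exact hcT p hp
  have hch : (H ++ (List.replicate n M).flatten ++ T).Chain' (fun p q => p.1.1 ≠ q.1.1) := by
    rw [List.append_assoc]
    exact List.isChain_append.mpr ⟨chH, (keyA n).1, fun x hx y hy => ((keyA n).2 y hy).1 x hx⟩
  refine ⟨?_, hcnt, hch⟩
  rw [← keyC, FreeGroup.toWord_mk, reduce_eq_self _ (chain'_runs _ hcnt hch)]

theorem sum_flat (f : (α × Bool) × ℕ → ℕ) (M : List ((α × Bool) × ℕ)) (k : ℕ) :
    (((List.replicate k M).flatten).map f).sum = k * (M.map f).sum := by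
  induction k with
  | zero => simp
  | succ k ih =>
    rw [List.replicate_succ, List.flatten_cons, List.map_append, List.sum_append, ih]
    ring

end Aux

/-- In the free group on `a₁, …, a_m` (`m ≥ 2`), let `f(g)` count the
occurrences of `a₁a₁` minus those of `a₁⁻¹a₁⁻¹` in the reduced word of `g`, and let
`b_k = a₂^k a₁^{−k} a₂ a₁^k`. Then for `j > i ≥ 1` and `g = b_i b_j⁻¹` one has
`f(gⁿ) = n` for all `n ∈ ℤ`. -/
theorem statement19 (m : ℕ) (hm : 2 ≤ m) (i j : ℕ) (hi : 1 ≤ i) (hij : i < j) :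
    ∀ n : ℤ,
      let x₀ : Fin m := ⟨0, by omega⟩
      let x₁ : Fin m := ⟨1, by omega⟩
      let a₁ : FreeGroup (Fin m) := FreeGroup.of x₀
      let a₂ : FreeGroup (Fin m) := FreeGroup.of x₁
      let f : FreeGroup (Fin m) → ℤ := fun g =>
        (occCount g.toWord [(x₀, true), (x₀, true)] : ℤ) -
        (occCount g.toWord [(x₀, false), (x₀, false)] : ℤ)
      let b : ℕ → FreeGroup (Fin m) := fun k => a₂ ^ k * (a₁ ^ k)⁻¹ * a₂ * a₁ ^ k
      f ((b i * (b j)⁻¹) ^ n) = n := by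
  intro n x₀ x₁ a₁ a₂ f b
  have hne : x₀ ≠ x₁ := by
    intro h
    have : (0 : ℕ) = 1 := congrArg Fin.val h
    omega
  have hne' : x₁ ≠ x₀ := hne.symm
  obtain ⟨i', rfl⟩ : ∃ i', i = i' + 1 := ⟨i - 1, by omega⟩
  obtain ⟨d', rfl⟩ : ∃ d', j = (i' + 1) + (d' + 1) := ⟨j - i' - 2, by omega⟩
  have ha₁ : a₁ = FreeGroup.of x₀ := rfl
  have ha₂ : a₂ = FreeGroup.of x₁ := rfl
  have hb : ∀ k, b k = a₂ ^ k * (a₁ ^ k)⁻¹ * a₂ * a₁ ^ k := fun _ => rfl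
  have hf : ∀ g : FreeGroup (Fin m), f g =
      (occCount g.toWord [(x₀, true), (x₀, true)] : ℤ) -
      (occCount g.toWord [(x₀, false), (x₀, false)] : ℤ) := fun _ => rfl
  rcases n with k | k
  · -- nonnegative
    rw [Int.ofNat_eq_natCast, zpow_natCast, hf]
    cases k with
    | zero => simp [FreeGroup.toWord_one, occCount_nil]
    | succ k =>
      have e1 : FreeGroup.mk (runs
          ([((x₁,true), i'+1), ((x₀,false), i'+1), ((x₁,true),1), ((x₀,false), d'+1),
            ((x₁,false),1), ((x₀,true), i'+1+(d'+1))] ++ [((x₁,false), i'+1+(d'+1))]))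
          = b (i'+1) * (b (i'+1+(d'+1)))⁻¹ := by
        simp only [List.cons_append, List.nil_append, runs_cons, runs_nil,
          List.append_nil, ← FreeGroup.mul_mk, mk_replicate_true, mk_replicate_false,
          pow_one, hb, ha₁, ha₂]
        group
      have e2 : FreeGroup.mk (runs
          ([((x₁,false), d'+1), ((x₀,false), i'+1), ((x₁,true),1), ((x₀,false), d'+1),
            ((x₁,false),1), ((x₀,true), i'+1+(d'+1))] ++ [((x₁,false), i'+1+(d'+1))]))
          = FreeGroup.mk (runs [((x₁,false), i'+1+(d'+1))]) *
            (b (i'+1) * (b (i'+1+(d'+1)))⁻¹) := by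
        simp only [List.cons_append, List.nil_append, runs_cons, runs_nil,
          List.append_nil, ← FreeGroup.mul_mk, mk_replicate_true, mk_replicate_false,
          pow_one, hb, ha₁, ha₂]
        group
      have C := core (b (i'+1) * (b (i'+1+(d'+1)))⁻¹)
        [((x₁,true), i'+1), ((x₀,false), i'+1), ((x₁,true),1), ((x₀,false), d'+1),
          ((x₁,false),1), ((x₀,true), i'+1+(d'+1))]
        [((x₁,false), d'+1), ((x₀,false), i'+1), ((x₁,true),1), ((x₀,false), d'+1),
          ((x₁,false),1), ((x₀,true), i'+1+(d'+1))]
        [((x₁,false), i'+1+(d'+1))]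
        (by intro p hp; fin_cases hp <;> omega)
        (by intro p hp; fin_cases hp <;> omega)
        (by intro p hp; fin_cases hp <;> omega)
        (by simp [List.Chain', List.isChain_cons_cons, hne, hne'])
        (by simp [List.Chain', List.isChain_cons_cons, hne, hne'])
        (by simp [List.Chain', List.isChain_singleton])
        (by simp [hne, hne'])
        (by simp [hne, hne'])
        (by simp [hne, hne'])
        (by simp [hne, hne'])
        e1 e2 k
      rw [C.1, occCount_runs _ _ C.2.1 C.2.2, occCount_runs _ _ C.2.1 C.2.2]
      simp only [List.map_append, List.sum_append, sum_flat,
        List.map_cons, List.map_nil, List.sum_cons, List.sum_nil]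
      simp only [Prod.mk.injEq, hne, hne', if_true, if_false, and_true, and_false,
        if_neg, Bool.true_eq_false, Bool.false_eq_true]
      have h1 : i' + 1 + (d' + 1) - 1 = i' + d' + 1 := by omega
      have h2 : i' + 1 - 1 = i' := by omega
      have h3 : d' + 1 - 1 = d' := by omega
      simp only [h1, h2, h3, Nat.add_zero, Nat.zero_add]
      push_cast
      ring
  · -- negative
    rw [zpow_negSucc, ← inv_pow, hf, Int.negSucc_eq]
    have e1 : FreeGroup.mk (runs
        ([((x₁,true), i'+1+(d'+1)), ((x₀,false), i'+1+(d'+1)), ((x₁,true),1), ((x₀,true), d'+1),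
          ((x₁,false),1), ((x₀,true), i'+1)] ++ [((x₁,false), i'+1)]))
        = (b (i'+1) * (b (i'+1+(d'+1)))⁻¹)⁻¹ := by
      simp only [List.cons_append, List.nil_append, runs_cons, runs_nil,
        List.append_nil, ← FreeGroup.mul_mk, mk_replicate_true, mk_replicate_false,
        pow_one, hb, ha₁, ha₂]
      group
    have e2 : FreeGroup.mk (runs
        ([((x₁,true), d'+1), ((x₀,false), i'+1+(d'+1)), ((x₁,true),1), ((x₀,true), d'+1),
          ((x₁,false),1), ((x₀,true), i'+1)] ++ [((x₁,false), i'+1)]))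
        = FreeGroup.mk (runs [((x₁,false), i'+1)]) *
          (b (i'+1) * (b (i'+1+(d'+1)))⁻¹)⁻¹ := by
      simp only [List.cons_append, List.nil_append, runs_cons, runs_nil,
        List.append_nil, ← FreeGroup.mul_mk, mk_replicate_true, mk_replicate_false,
        pow_one, hb, ha₁, ha₂]
      group
    have C := core ((b (i'+1) * (b (i'+1+(d'+1)))⁻¹)⁻¹)
      [((x₁,true), i'+1+(d'+1)), ((x₀,false), i'+1+(d'+1)), ((x₁,true),1), ((x₀,true), d'+1),
        ((x₁,false),1), ((x₀,true), i'+1)]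
      [((x₁,true), d'+1), ((x₀,false), i'+1+(d'+1)), ((x₁,true),1), ((x₀,true), d'+1),
        ((x₁,false),1), ((x₀,true), i'+1)]
      [((x₁,false), i'+1)]
      (by intro p hp; fin_cases hp <;> omega)
      (by intro p hp; fin_cases hp <;> omega)
      (by intro p hp; fin_cases hp <;> omega)
      (by simp [List.Chain', List.isChain_cons_cons, hne, hne'])
      (by simp [List.Chain', List.isChain_cons_cons, hne, hne'])
      (by simp [List.Chain', List.isChain_singleton])
      (by simp [hne, hne'])
      (by simp [hne, hne'])
      (by simp [hne, hne'])
      (by simp [hne, hne'])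
      e1 e2 k
    rw [C.1, occCount_runs _ _ C.2.1 C.2.2, occCount_runs _ _ C.2.1 C.2.2]
    simp only [List.map_append, List.sum_append, sum_flat,
      List.map_cons, List.map_nil, List.sum_cons, List.sum_nil]
    simp only [Prod.mk.injEq, hne, hne', if_true, if_false, and_true, and_false,
      if_neg, Bool.true_eq_false, Bool.false_eq_true]
    have h1 : i' + 1 + (d' + 1) - 1 = i' + d' + 1 := by omega
    have h2 : i' + 1 - 1 = i' := by omega
    have h3 : d' + 1 - 1 = d' := by omega
    simp only [h1, h2, h3, Nat.add_zero, Nat.zero_add]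
    push_cast
    ring
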